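/- Let Γ be a linearly ordered abelian group, M a field equipped with a valuation v : M → Γ'₀ (with value group Γ'), and let F = HahnSeries Γ M be the field of Hahn series over M with exponents in Γ. Define w on F \ {0} by w(f) = (v(c), γ₀) ∈ Lex(Γ × Γ'), where γ₀ is the minimal element of the support of f and c is its coefficient, with the lexicographic order in which the Γ-coordinate dominates. Then w is a valuation on F extending v (via constant series), with value group Γ ×_lex Γ'. -/

import Mathlib

section Aux

variable {Γ Γ' : Type*} [AddCommGroup Γ] [LinearOrder Γ] [IsOrderedAddMonoid Γ]
    [AddCommGroup Γ'] [LinearOrder Γ'] [IsOrderedAddMonoid Γ']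
variable {M : Type*} [Field M]

lemma stmt17_lc (x : HahnSeries Γ M) : x.leadingCoeff = x.coeff x.order := by
  rcases eq_or_ne x 0 with rfl | hx
  · simp
  · exact HahnSeries.leadingCoeff_eq

lemma stmt17_v_ne_top (v : AddValuation M (WithTop Γ')) {a : M} (ha : a ≠ 0) :
    ∃ γ : Γ', v a = (γ : WithTop Γ') := by
  cases hva : v a with
  | top =>
    have h1 : v (a * a⁻¹) = v a + v a⁻¹ := v.map_mul a a⁻¹
    rw [mul_inv_cancel₀ ha, v.map_one, hva, top_add] at h1
    simp at h1
  | coe γ => exact ⟨γ, rfl⟩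

end Aux

/-- The composed valuation on the Hahn series field F = M((t^Γ)): there is a valuation
w on F with value group Γ ×_lex Γ' (Γ-coordinate dominating), given on a nonzero
series by the pair (order, v(leading coefficient)), and extending v on constants. -/
theorem stmt_17 {Γ Γ' : Type*} [AddCommGroup Γ] [LinearOrder Γ] [IsOrderedAddMonoid Γ]
    [AddCommGroup Γ'] [LinearOrder Γ'] [IsOrderedAddMonoid Γ']
    {M : Type*} [Field M] (v : AddValuation M (WithTop Γ')) :
    ∃ w : AddValuation (HahnSeries Γ M) (WithTop (Lex (Γ × Γ'))),
      (∀ f : HahnSeries Γ M, f ≠ 0 → ∀ γ' : Γ', v (f.coeff f.order) = (γ' : WithTop Γ') →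
        w f = ((toLex (f.order, γ') : Lex (Γ × Γ')) : WithTop (Lex (Γ × Γ')))) ∧
      (∀ x : M, w (HahnSeries.C x) =
        WithTop.map (fun g : Γ' => toLex ((0 : Γ), g)) (v x)) := by
  classical
  set wf : HahnSeries Γ M → WithTop (Lex (Γ × Γ')) :=
    fun f => WithTop.map (fun g' : Γ' => toLex (f.order, g')) (v (f.coeff f.order)) with hwf
  have h0 : wf 0 = ⊤ := by simp [hwf, v.map_zero]
  have h1 : wf 1 = 0 := by
    simp only [hwf, HahnSeries.order_one]
    rw [show (1 : HahnSeries Γ M).coeff (0 : Γ) = 1 by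
      simpa [stmt17_lc] using (HahnSeries.leadingCoeff_one (R := M) (Γ := Γ)).symm ▸
        (stmt17_lc (1 : HahnSeries Γ M)).symm]
    rw [v.map_one]
    rfl
  have hne : ∀ (f : HahnSeries Γ M), f ≠ 0 → ∃ γ : Γ',
      v (f.coeff f.order) = (γ : WithTop Γ') :=
    fun f hf => stmt17_v_ne_top v (HahnSeries.coeff_order_eq_zero.not.mpr hf)
  have hmul : ∀ x y, wf (x * y) = wf x + wf y := by
    intro x y
    rcases eq_or_ne x 0 with rfl | hx
    · simp [hwf, v.map_zero]
    rcases eq_or_ne y 0 with rfl | hy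
    · simp [hwf, v.map_zero]
    have hxy : x * y ≠ 0 := mul_ne_zero hx hy
    obtain ⟨γx, hγx⟩ := hne x hx
    obtain ⟨γy, hγy⟩ := hne y hy
    have hordm : (x * y).order = x.order + y.order := HahnSeries.order_mul hx hy
    have hcoef : (x * y).coeff ((x * y).order) = x.coeff x.order * y.coeff y.order := by
      rw [hordm, HahnSeries.coeff_mul_order_add_order, stmt17_lc, stmt17_lc]
    have hv : v ((x * y).coeff ((x * y).order)) = ((γx + γy : Γ') : WithTop Γ') := by
      rw [hcoef, v.map_mul, hγx, hγy, ← WithTop.coe_add]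
    simp only [hwf]
    rw [hv, hγx, hγy, WithTop.map_coe, WithTop.map_coe, WithTop.map_coe, ← WithTop.coe_add, hordm]
    rfl
  have hadd : ∀ x y, min (wf x) (wf y) ≤ wf (x + y) := by
    -- first a helper under the assumption x.order ≤ y.order
    have key : ∀ x y : HahnSeries Γ M, x ≠ 0 → y ≠ 0 → x + y ≠ 0 → x.order ≤ y.order →
        min (wf x) (wf y) ≤ wf (x + y) := by
      intro x y hx hy hs hord
      obtain ⟨γx, hγx⟩ := hne x hx
      obtain ⟨γy, hγy⟩ := hne y hy
      obtain ⟨γs, hγs⟩ := hne _ hs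
      have hos : min x.order y.order ≤ (x + y).order := HahnSeries.min_order_le_order_add hs
      rw [min_eq_left hord] at hos
      simp only [hwf, hγx, hγy, hγs, WithTop.map_coe]
      rw [← WithTop.coe_min, WithTop.coe_le_coe, min_le_iff]
      rcases lt_or_eq_of_le hord with hlt | heq
      · -- x.order < y.order : the sum has the same order and leading coeff as x
        have hyc : y.coeff x.order = 0 := HahnSeries.coeff_eq_zero_of_lt_order hlt
        have hsc : (x + y).coeff x.order = x.coeff x.order := by
          rw [HahnSeries.coeff_add, hyc, add_zero]
        have hso : (x + y).order = x.order := by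
          refine le_antisymm ?_ hos
          apply HahnSeries.order_le_of_coeff_ne_zero
          rw [hsc]; exact HahnSeries.coeff_order_eq_zero.not.mpr hx
        have : (γs : WithTop Γ') = (γx : WithTop Γ') := by
          rw [← hγs, ← hγx, hso, hsc]
        left
        rw [hso, WithTop.coe_inj.mp this]
      · -- equal orders
        rcases lt_or_eq_of_le hos with hlt2 | heq2
        · left
          rw [Prod.Lex.le_iff]
          exact Or.inl hlt2
        · have hsc : (x + y).coeff (x + y).order = x.coeff x.order + y.coeff y.order := by
            rw [← heq2, HahnSeries.coeff_add, heq]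
          have hmin : min (γx : WithTop Γ') (γy : WithTop Γ') ≤ (γs : WithTop Γ') := by
            rw [← hγx, ← hγy, ← hγs, hsc]
            exact v.map_add _ _
          rw [← WithTop.coe_min, WithTop.coe_le_coe, min_le_iff] at hmin
          rcases hmin with h | h
          · left
            rw [Prod.Lex.le_iff]
            rcases lt_or_eq_of_le hos with h2 | h2
            · exact Or.inl h2
            · exact Or.inr ⟨h2, h⟩
          · right
            rw [Prod.Lex.le_iff]
            rcases lt_or_eq_of_le (heq ▸ hos) with h2 | h2
            · exact Or.inl h2
            · exact Or.inr ⟨h2, h⟩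
    intro x y
    rcases eq_or_ne x 0 with rfl | hx
    · simp [h0]
    rcases eq_or_ne y 0 with rfl | hy
    · simp [h0]
    rcases eq_or_ne (x + y) 0 with hs | hs
    · rw [hs, h0]; exact le_top
    rcases le_total x.order y.order with hord | hord
    · exact key x y hx hy hs hord
    · rw [min_comm, add_comm] at *
      exact key y x hy hx hs hord
  refine ⟨AddValuation.of wf h0 h1 hadd hmul, ?_, ?_⟩
  · intro f hf γ' hγ'
    simp only [AddValuation.of_apply, hwf, hγ', WithTop.map_coe]
  · intro x
    rcases eq_or_ne x 0 with rfl | hx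
    · simp [AddValuation.of_apply, h0, v.map_zero]
    · have horder : (HahnSeries.C x : HahnSeries Γ M).order = 0 := HahnSeries.order_C
      have hcoeff : (HahnSeries.C x : HahnSeries Γ M).coeff 0 = x := by
        simp [HahnSeries.C_apply]
      simp only [AddValuation.of_apply, hwf, horder, hcoeff]
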